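/- Let G act on X, and for each condition c let K¹_c, ..., Kⁿ_c be Markov kernels such that the first kernels satisfy K_{T·c}(x, A) = K_c(x, A) (invariance in c and x), one kernel satisfies K_{T·c}(x, T·A) = K_c(x, A), and the remaining kernels satisfy K_{T·c}(T·x, T·A) = K_c(x, A). If the initial distribution μ_c satisfies μ_{T·c} = μ_c, then the final marginal ν_c obtained by composing the kernels satisfies ν_{T·c}(T·A) = ν_c(A). -/

import Mathlib

open MeasureTheory
open scoped Pointwise

/-- The marginal obtained by pushing an initial measure `μ c` through the
kernels `κ 0 c, κ 1 c, …, κ (n-1) c` in order. -/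
noncomputable def finalMarginal {C X : Type*} [MeasurableSpace X] (n : ℕ)
    (μ : C → Measure X) (κ : Fin n → C → X → Measure X) (c : C) : Measure X :=
  (List.finRange n).foldl (fun ρ i => ρ.bind (κ i c)) (μ c)

section Aux

variable {X : Type*} [MeasurableSpace X]

/-- Pushing forward each value of `f` by a measurable equivalence commutes with `bind`. -/
lemma bind_map_equiv (e : X ≃ᵐ X) (ρ : Measure X) (f : X → Measure X) :
    ρ.bind (fun x => (f x).map e) = (ρ.bind f).map e := by
  have hmapE : Measurable (Measure.map (e : X → X)) :=
    Measure.measurable_map _ e.measurable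
  by_cases hf : AEMeasurable f ρ
  · rw [Measure.bind, Measure.bind]
    have h1 : ρ.map (fun x => (f x).map e)
        = (ρ.map f).map (Measure.map (e : X → X)) := by
      rw [AEMeasurable.map_map_of_aemeasurable hmapE.aemeasurable hf]
      rfl
    rw [h1, Measure.join_map_map e.measurable]
  · have hg : ¬ AEMeasurable (fun x => (f x).map e) ρ := by
      intro h
      apply hf
      have h2 := (Measure.measurable_map (e.symm : X → X) e.symm.measurable).comp_aemeasurable h
      have h3 : (Measure.map (e.symm : X → X) ∘ fun x => (f x).map e) = f := by
        funext x
        simp [Function.comp, e.map_symm_map]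
      rwa [h3] at h2
    rw [Measure.bind, Measure.bind, Measure.map_of_not_aemeasurable hf,
      Measure.map_of_not_aemeasurable hg]
    simp

/-- Precomposing with the inverse of a measurable equivalence cancels a pushforward
of the base measure in `bind`. -/
lemma map_bind_comp_equiv (e : X ≃ᵐ X) (ρ : Measure X) (f : X → Measure X) :
    (ρ.map e).bind (fun y => f (e.symm y)) = ρ.bind f := by
  by_cases hf : AEMeasurable f ρ
  · have h0 : AEMeasurable f ((ρ.map e).map e.symm) := by rwa [e.map_symm_map]
    have h1 : AEMeasurable (fun y => f (e.symm y)) (ρ.map e) :=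
      h0.comp_aemeasurable e.symm.measurable.aemeasurable
    rw [Measure.bind, Measure.bind,
      AEMeasurable.map_map_of_aemeasurable h1 e.measurable.aemeasurable]
    have h4 : ((fun y => f (e.symm y)) ∘ (e : X → X)) = f := by
      funext x; simp
    rw [h4]
  · have h2 : ¬ AEMeasurable (fun y => f (e.symm y)) (ρ.map e) := by
      intro h
      apply hf
      have h3 := h.comp_aemeasurable (f := (e : X → X)) e.measurable.aemeasurable
      have h4 : ((fun y => f (e.symm y)) ∘ (e : X → X)) = f := by
        funext x; simp
      rwa [h4] at h3
    rw [Measure.bind, Measure.bind, Measure.map_of_not_aemeasurable hf,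
      Measure.map_of_not_aemeasurable h2]

end Aux


/-- Folding two step functions that agree on the elements of the list gives equal results. -/
theorem foldl_congr_of_mem' {α M : Type*} (f g : M → α → M) :
    ∀ (l : List α), (∀ i ∈ l, ∀ ρ : M, f ρ i = g ρ i) → ∀ ρ : M,
      l.foldl f ρ = l.foldl g ρ := by
  intro l
  induction l with
  | nil => intro _ ρ; rfl
  | cons i l ih =>
      intro hl ρ
      simp only [List.foldl_cons]
      rw [hl i List.mem_cons_self ρ]
      exact ih (fun j hj => hl j (List.mem_cons_of_mem i hj)) _

/-- If a map `Φ` intertwines the step functions on the elements of the list, it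
intertwines the folds. -/
theorem foldl_intertwine' {α M N : Type*} (f : M → α → M) (g : N → α → N) (Φ : N → M) :
    ∀ (l : List α), (∀ i ∈ l, ∀ ρ : N, f (Φ ρ) i = Φ (g ρ i)) → ∀ ρ : N,
      l.foldl f (Φ ρ) = Φ (l.foldl g ρ) := by
  intro l
  induction l with
  | nil => intro _ ρ; rfl
  | cons i l ih =>
      intro hl ρ
      simp only [List.foldl_cons]
      rw [hl i List.mem_cons_self ρ]
      exact ih (fun j hj => hl j (List.mem_cons_of_mem i hj)) _

/-- If the initial distribution is invariant in the condition `c`, the kernels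
before position `m` are invariant in both `c` and the state, the kernel at
position `m` satisfies `K_{T·c}(x, T·A) = K_c(x, A)`, and the kernels after
position `m` are fully equivariant (`K_{T·c}(T·x, T·A) = K_c(x, A)`), then the
final marginal satisfies `ν_{T·c}(T·A) = ν_c(A)`. -/
theorem finalMarginal_equivariant
    {G C X : Type*} [Group G] [MulAction G C]
    [MeasurableSpace X] [MulAction G X]
    (hmeas : ∀ T : G, Measurable fun x : X => T • x)
    (n : ℕ) (μ : C → Measure X) (hprob : ∀ c, IsProbabilityMeasure (μ c))
    (hμ : ∀ (T : G) (c : C), μ (T • c) = μ c)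
    (κ : Fin n → C → X → Measure X)
    (hMarkov : ∀ (i : Fin n) (c : C) (x : X), IsProbabilityMeasure (κ i c x))
    (m : Fin n)
    (hInv : ∀ (i : Fin n), i < m → ∀ (T : G) (c : C) (x : X) (A : Set X),
      MeasurableSet A → κ i (T • c) x A = κ i c x A)
    (hMid : ∀ (T : G) (c : C) (x : X) (A : Set X),
      MeasurableSet A → κ m (T • c) x (T • A) = κ m c x A)
    (hEquiv : ∀ (i : Fin n), m < i → ∀ (T : G) (c : C) (x : X) (A : Set X),
      MeasurableSet A → κ i (T • c) (T • x) (T • A) = κ i c x A) :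
    ∀ (T : G) (c : C) (A : Set X), MeasurableSet A →
      finalMarginal n μ κ (T • c) (T • A) = finalMarginal n μ κ c A := by
  intro T c A hA
  -- the measurable equivalence given by the action of `T`
  let e : X ≃ᵐ X :=
    { toEquiv := MulAction.toPerm T
      measurable_toFun := hmeas T
      measurable_invFun := hmeas T⁻¹ }
  have he : (e : X → X) = fun x => T • x := rfl
  -- rewrite the kernels for the shifted condition
  have hinv' : ∀ i : Fin n, i < m → κ i (T • c) = κ i c := by
    intro i hi
    funext x
    ext B hB
    exact hInv i hi T c x B hB
  have hmid' : ∀ x, κ m (T • c) x = (κ m c x).map e := by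
    intro x
    ext B hB
    have hB' : MeasurableSet (T⁻¹ • B) := by
      rw [← Set.preimage_smul]; exact hmeas T hB
    calc κ m (T • c) x B = κ m (T • c) x (T • (T⁻¹ • B)) := by rw [smul_inv_smul]
      _ = κ m c x (T⁻¹ • B) := hMid T c x _ hB'
      _ = (κ m c x).map e B := by
            rw [e.map_apply, he, Set.preimage_smul]
  have hequiv' : ∀ i : Fin n, m < i → ∀ y,
      κ i (T • c) y = (κ i c (T⁻¹ • y)).map e := by
    intro i hi y
    ext B hB
    have hB' : MeasurableSet (T⁻¹ • B) := by
      rw [← Set.preimage_smul]; exact hmeas T hB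
    calc κ i (T • c) y B
        = κ i (T • c) (T • (T⁻¹ • y)) (T • (T⁻¹ • B)) := by
          rw [smul_inv_smul, smul_inv_smul]
      _ = κ i c (T⁻¹ • y) (T⁻¹ • B) := hEquiv i hi T c _ _ hB'
      _ = (κ i c (T⁻¹ • y)).map e B := by
            rw [e.map_apply, he, Set.preimage_smul]
  -- folding over kernels before `m` preserves equality
  have fold_pre : ∀ (l : List (Fin n)), (∀ i ∈ l, i < m) → ∀ ρ : Measure X,
      l.foldl (fun ρ i => ρ.bind (κ i (T • c))) ρ
        = l.foldl (fun ρ i => ρ.bind (κ i c)) ρ := by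
    intro l hl
    exact foldl_congr_of_mem' _ _ l
      (fun i hi ρ => by rw [hinv' i (hl i hi)])
  -- folding over kernels after `m` intertwines with `map e`
  have fold_post : ∀ (l : List (Fin n)), (∀ i ∈ l, m < i) → ∀ ρ : Measure X,
      l.foldl (fun ρ i => ρ.bind (κ i (T • c))) (ρ.map e)
        = (l.foldl (fun ρ i => ρ.bind (κ i c)) ρ).map e := by
    intro l hl
    refine foldl_intertwine' _ _ (Measure.map (e : X → X)) l ?_
    intro i hi ρ
    have h1 : (fun y => κ i (T • c) y)
        = fun y => ((κ i c (e.symm y)).map e) := by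
      funext y
      rw [hequiv' i (hl i hi) y]
      rfl
    calc (ρ.map (e : X → X)).bind (κ i (T • c))
        = (ρ.map e).bind (fun y => ((κ i c (e.symm y)).map e)) := by rw [← h1]
      _ = ((ρ.map e).bind (fun y => κ i c (e.symm y))).map e :=
          bind_map_equiv e _ _
      _ = (ρ.bind (κ i c)).map e := by rw [map_bind_comp_equiv e ρ (κ i c)]
  -- decompose the list of kernels around `m`
  have hmlt : (m : ℕ) < (List.finRange n).length := by
    simpa using m.isLt
  have hdrop : (List.finRange n).drop (m : ℕ)
      = m :: (List.finRange n).drop ((m : ℕ) + 1) := by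
    rw [List.drop_eq_getElem_cons hmlt]
    congr 1
    simp
  have hsplit : List.finRange n
      = (List.finRange n).take (m : ℕ) ++ m :: (List.finRange n).drop ((m : ℕ) + 1) := by
    conv_lhs => rw [← List.take_append_drop (m : ℕ) (List.finRange n)]
    rw [hdrop]
  have hpw : ((List.finRange n).take (m : ℕ)
      ++ m :: (List.finRange n).drop ((m : ℕ) + 1)).Pairwise (· < ·) := by
    rw [← hsplit]; exact List.pairwise_lt_finRange n
  rw [List.pairwise_append] at hpw
  have htake : ∀ i ∈ (List.finRange n).take (m : ℕ), i < m :=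
    fun i hi => hpw.2.2 i hi m List.mem_cons_self
  have hdrop' : ∀ i ∈ (List.finRange n).drop ((m : ℕ) + 1), m < i := by
    intro i hi
    exact (List.pairwise_cons.mp hpw.2.1).1 i hi
  -- assemble
  have key : finalMarginal n μ κ (T • c) = (finalMarginal n μ κ c).map e := by
    unfold finalMarginal
    rw [hμ T c, hsplit]
    simp only [List.foldl_append, List.foldl_cons]
    rw [fold_pre _ htake (μ c)]
    generalize ((List.finRange n).take (m : ℕ)).foldl
      (fun ρ i => ρ.bind (κ i c)) (μ c) = ρ
    have hstepm : ρ.bind (κ m (T • c)) = (ρ.bind (κ m c)).map e := by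
      have hfun : κ m (T • c) = fun x => (κ m c x).map e := funext hmid'
      rw [hfun]
      exact bind_map_equiv e ρ (κ m c)
    rw [hstepm]
    exact fold_post _ hdrop' _
  rw [key, e.map_apply, he, Set.preimage_smul, inv_smul_smul]
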